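/- arXiv:1810.11355 — 3 statements merged into one kernel-verified Lean document; each statement's English description precedes it below -/
import Mathlib

section
/- In the calculus consisting solely of the rule Repl₁⁻, the rule Repl⁻ is derivable: for every atomic formula P, terms s and r, variable v not occurring in s or r, and finite multisets Γ, Δ of formulas, the sequent s = r, P[v/s], Γ ⇒ Δ can be obtained from the sequent s = r, P[v/r], Γ ⇒ Δ by finitely many applications of the rule Repl₁⁻ (the number of applications being the number of occurrences of v in P). -/
open FirstOrder Language Multiset

universe u v

variable {L : FirstOrder.Language.{u, v}}

/-- Number of occurrences of the variable `v` in a term. -/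
def tCount (v : ℕ) : L.Term ℕ → ℕ
  | .var w => if w = v then 1 else 0
  | .func _ ts => Finset.univ.sum fun i => tCount v (ts i)

/-- First-order formulas over the language `L` (with built-in equality),
with natural numbers as variables. -/
inductive Fm (L : FirstOrder.Language.{u, v}) : Type (max u v) where
  | falsum : Fm L
  | equal : L.Term ℕ → L.Term ℕ → Fm L
  | rel {l : ℕ} : L.Relations l → (Fin l → L.Term ℕ) → Fm L
  | and : Fm L → Fm L → Fm L
  | or : Fm L → Fm L → Fm L
  | imp : Fm L → Fm L → Fm L
  | all : ℕ → Fm L → Fm L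
  | ex : ℕ → Fm L → Fm L

namespace Fm

/-- Atomic formulas: equalities and relational atoms. -/
inductive IsAtomic : Fm L → Prop where
  | equal (t₁ t₂ : L.Term ℕ) : (Fm.equal t₁ t₂).IsAtomic
  | rel {l : ℕ} (R : L.Relations l) (ts : Fin l → L.Term ℕ) : (Fm.rel R ts).IsAtomic

/-- Number of free occurrences of the variable `v` in a formula. -/
def fCount (v : ℕ) : Fm L → ℕ
  | falsum => 0
  | equal t₁ t₂ => tCount v t₁ + tCount v t₂
  | rel _ ts => Finset.univ.sum fun i => tCount v (ts i)
  | and A B => fCount v A + fCount v B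
  | or A B => fCount v A + fCount v B
  | imp A B => fCount v A + fCount v B
  | all y A => if y = v then 0 else fCount v A
  | ex y A => if y = v then 0 else fCount v A

/-- The set of free variables of a formula. -/
def freeVars : Fm L → Set ℕ
  | falsum => ∅
  | equal t₁ t₂ => {w | tCount w t₁ ≠ 0 ∨ tCount w t₂ ≠ 0}
  | rel _ ts => {w | ∃ i, tCount w (ts i) ≠ 0}
  | and A B => A.freeVars ∪ B.freeVars
  | or A B => A.freeVars ∪ B.freeVars
  | imp A B => A.freeVars ∪ B.freeVars
  | all y A => A.freeVars \ {y}
  | ex y A => A.freeVars \ {y}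

/-- Simultaneous substitution of terms for the free variables of a formula. -/
def ssub (σ : ℕ → L.Term ℕ) : Fm L → Fm L
  | falsum => falsum
  | equal t₁ t₂ => equal (t₁.subst σ) (t₂.subst σ)
  | rel R ts => rel R fun i => (ts i).subst σ
  | and A B => and (A.ssub σ) (B.ssub σ)
  | or A B => or (A.ssub σ) (B.ssub σ)
  | imp A B => imp (A.ssub σ) (B.ssub σ)
  | all y A => all y (A.ssub (Function.update σ y (Term.var y)))
  | ex y A => ex y (A.ssub (Function.update σ y (Term.var y)))

/-- `A.subst v t` is `A[v/t]`, the substitution of the term `t`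
for the variable `v` in `A`. -/
def subst (v : ℕ) (t : L.Term ℕ) (A : Fm L) : Fm L :=
  A.ssub (Function.update (Term.var : ℕ → L.Term ℕ) v t)

/-- `t` is free for `x` in `A` (no free occurrence of `x` lies in the scope of a
quantifier binding a variable of `t`). -/
def freeFor (t : L.Term ℕ) (x : ℕ) : Fm L → Prop
  | falsum => True
  | equal _ _ => True
  | rel _ _ => True
  | and A B => freeFor t x A ∧ freeFor t x B
  | or A B => freeFor t x A ∧ freeFor t x B
  | imp A B => freeFor t x A ∧ freeFor t x B
  | all y A => x = y ∨ x ∉ A.freeVars ∨ (tCount y t = 0 ∧ freeFor t x A)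
  | ex y A => x = y ∨ x ∉ A.freeVars ∨ (tCount y t = 0 ∧ freeFor t x A)

end Fm

/-- The rule Repl, given as the relation between the antecedent of the premiss and the
antecedent of the conclusion (the succedent is unchanged): from
`s = r, P[v/s], P[v/r], Γ ⇒ Δ` infer `s = r, P[v/s], Γ ⇒ Δ`, for `P` atomic and
`v` not occurring in `s, r`. -/
def ReplFull (L : FirstOrder.Language.{u, v}) : Multiset (Fm L) → Multiset (Fm L) → Prop := fun Γp Γc =>
  ∃ (s r : L.Term ℕ) (v : ℕ) (P : Fm L) (Γ : Multiset (Fm L)),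
    P.IsAtomic ∧ tCount v s = 0 ∧ tCount v r = 0 ∧
    Γp = Fm.equal s r ::ₘ P.subst v s ::ₘ P.subst v r ::ₘ Γ ∧
    Γc = Fm.equal s r ::ₘ P.subst v s ::ₘ Γ

/-- The rule Repl⁻: from `s = r, P[v/r], Γ ⇒ Δ` infer `s = r, P[v/s], Γ ⇒ Δ`,
for `P` atomic and `v` not occurring in `s, r`. -/
def ReplMinus (L : FirstOrder.Language.{u, v}) : Multiset (Fm L) → Multiset (Fm L) → Prop := fun Γp Γc =>
  ∃ (s r : L.Term ℕ) (v : ℕ) (P : Fm L) (Γ : Multiset (Fm L)),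
    P.IsAtomic ∧ tCount v s = 0 ∧ tCount v r = 0 ∧
    Γp = Fm.equal s r ::ₘ P.subst v r ::ₘ Γ ∧
    Γc = Fm.equal s r ::ₘ P.subst v s ::ₘ Γ

/-- The rule Repl₁⁻: Repl⁻ restricted to atomic `P` with exactly one occurrence of `v`. -/
def ReplMinus1 (L : FirstOrder.Language.{u, v}) : Multiset (Fm L) → Multiset (Fm L) → Prop := fun Γp Γc =>
  ∃ (s r : L.Term ℕ) (v : ℕ) (P : Fm L) (Γ : Multiset (Fm L)),
    P.IsAtomic ∧ tCount v s = 0 ∧ tCount v r = 0 ∧ Fm.fCount v P = 1 ∧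
    Γp = Fm.equal s r ::ₘ P.subst v r ::ₘ Γ ∧
    Γc = Fm.equal s r ::ₘ P.subst v s ::ₘ Γ

/-- `DerC rp n Γ Δ`: the sequent `Γ ⇒ Δ` has a derivation of height at most `n` in the
classical multisuccedent G3 calculus `G3c` with the equality rule Ref and the
replacement rule given by `rp` (e.g. `ReplFull L` for `G3c^=`, `ReplMinus L` for `G3c^=⁻`,
`ReplMinus1 L` for `G3c₁^=⁻`). -/
inductive DerC (rp : Multiset (Fm L) → Multiset (Fm L) → Prop) :
    ℕ → Multiset (Fm L) → Multiset (Fm L) → Prop where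
  | ax {n : ℕ} {Γ Δ : Multiset (Fm L)} {P : Fm L} (hP : P.IsAtomic) :
      DerC rp n (P ::ₘ Γ) (P ::ₘ Δ)
  | botL {n : ℕ} {Γ Δ : Multiset (Fm L)} : DerC rp n (Fm.falsum ::ₘ Γ) Δ
  | andL {n : ℕ} {Γ Δ : Multiset (Fm L)} {A B : Fm L} :
      DerC rp n (A ::ₘ B ::ₘ Γ) Δ → DerC rp (n + 1) (Fm.and A B ::ₘ Γ) Δ
  | andR {n : ℕ} {Γ Δ : Multiset (Fm L)} {A B : Fm L} :
      DerC rp n Γ (A ::ₘ Δ) → DerC rp n Γ (B ::ₘ Δ) → DerC rp (n + 1) Γ (Fm.and A B ::ₘ Δ)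
  | orL {n : ℕ} {Γ Δ : Multiset (Fm L)} {A B : Fm L} :
      DerC rp n (A ::ₘ Γ) Δ → DerC rp n (B ::ₘ Γ) Δ → DerC rp (n + 1) (Fm.or A B ::ₘ Γ) Δ
  | orR {n : ℕ} {Γ Δ : Multiset (Fm L)} {A B : Fm L} :
      DerC rp n Γ (A ::ₘ B ::ₘ Δ) → DerC rp (n + 1) Γ (Fm.or A B ::ₘ Δ)
  | impL {n : ℕ} {Γ Δ : Multiset (Fm L)} {A B : Fm L} :
      DerC rp n Γ (A ::ₘ Δ) → DerC rp n (B ::ₘ Γ) Δ → DerC rp (n + 1) (Fm.imp A B ::ₘ Γ) Δ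
  | impR {n : ℕ} {Γ Δ : Multiset (Fm L)} {A B : Fm L} :
      DerC rp n (A ::ₘ Γ) (B ::ₘ Δ) → DerC rp (n + 1) Γ (Fm.imp A B ::ₘ Δ)
  | allL {n : ℕ} {Γ Δ : Multiset (Fm L)} {x : ℕ} {t : L.Term ℕ} {A : Fm L}
      (hf : Fm.freeFor t x A) :
      DerC rp n (A.subst x t ::ₘ Fm.all x A ::ₘ Γ) Δ → DerC rp (n + 1) (Fm.all x A ::ₘ Γ) Δ
  | allR {n : ℕ} {Γ Δ : Multiset (Fm L)} {x y : ℕ} {A : Fm L}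
      (hf : Fm.freeFor (Term.var y) x A) (hy : y ∉ (Fm.all x A).freeVars)
      (hΓ : ∀ C ∈ Γ, y ∉ Fm.freeVars C) (hΔ : ∀ C ∈ Δ, y ∉ Fm.freeVars C) :
      DerC rp n Γ (A.subst x (Term.var y) ::ₘ Δ) → DerC rp (n + 1) Γ (Fm.all x A ::ₘ Δ)
  | exL {n : ℕ} {Γ Δ : Multiset (Fm L)} {x y : ℕ} {A : Fm L}
      (hf : Fm.freeFor (Term.var y) x A) (hy : y ∉ (Fm.ex x A).freeVars)
      (hΓ : ∀ C ∈ Γ, y ∉ Fm.freeVars C) (hΔ : ∀ C ∈ Δ, y ∉ Fm.freeVars C) :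
      DerC rp n (A.subst x (Term.var y) ::ₘ Γ) Δ → DerC rp (n + 1) (Fm.ex x A ::ₘ Γ) Δ
  | exR {n : ℕ} {Γ Δ : Multiset (Fm L)} {x : ℕ} {t : L.Term ℕ} {A : Fm L}
      (hf : Fm.freeFor t x A) :
      DerC rp n Γ (A.subst x t ::ₘ Fm.ex x A ::ₘ Δ) → DerC rp (n + 1) Γ (Fm.ex x A ::ₘ Δ)
  | ref {n : ℕ} {Γ Δ : Multiset (Fm L)} (t : L.Term ℕ) :
      DerC rp n (Fm.equal t t ::ₘ Γ) Δ → DerC rp (n + 1) Γ Δ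
  | repl {n : ℕ} {Γp Γc Δ : Multiset (Fm L)} (h : rp Γp Γc) :
      DerC rp n Γp Δ → DerC rp (n + 1) Γc Δ

/-- `DerI rp n Γ Δ`: the sequent `Γ ⇒ Δ` has a derivation of height at most `n` in the
intuitionistic multisuccedent G3 calculus (the right rules for `→` and `∀` have
single-succedent premisses, and L→ repeats its principal formula) with the equality rule
Ref and the replacement rule given by `rp`. -/
inductive DerI (rp : Multiset (Fm L) → Multiset (Fm L) → Prop) :
    ℕ → Multiset (Fm L) → Multiset (Fm L) → Prop where
  | ax {n : ℕ} {Γ Δ : Multiset (Fm L)} {P : Fm L} (hP : P.IsAtomic) :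
      DerI rp n (P ::ₘ Γ) (P ::ₘ Δ)
  | botL {n : ℕ} {Γ Δ : Multiset (Fm L)} : DerI rp n (Fm.falsum ::ₘ Γ) Δ
  | andL {n : ℕ} {Γ Δ : Multiset (Fm L)} {A B : Fm L} :
      DerI rp n (A ::ₘ B ::ₘ Γ) Δ → DerI rp (n + 1) (Fm.and A B ::ₘ Γ) Δ
  | andR {n : ℕ} {Γ Δ : Multiset (Fm L)} {A B : Fm L} :
      DerI rp n Γ (A ::ₘ Δ) → DerI rp n Γ (B ::ₘ Δ) → DerI rp (n + 1) Γ (Fm.and A B ::ₘ Δ)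
  | orL {n : ℕ} {Γ Δ : Multiset (Fm L)} {A B : Fm L} :
      DerI rp n (A ::ₘ Γ) Δ → DerI rp n (B ::ₘ Γ) Δ → DerI rp (n + 1) (Fm.or A B ::ₘ Γ) Δ
  | orR {n : ℕ} {Γ Δ : Multiset (Fm L)} {A B : Fm L} :
      DerI rp n Γ (A ::ₘ B ::ₘ Δ) → DerI rp (n + 1) Γ (Fm.or A B ::ₘ Δ)
  | impL {n : ℕ} {Γ Δ : Multiset (Fm L)} {A B : Fm L} :
      DerI rp n (Fm.imp A B ::ₘ Γ) (A ::ₘ Δ) → DerI rp n (B ::ₘ Γ) Δ →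
      DerI rp (n + 1) (Fm.imp A B ::ₘ Γ) Δ
  | impR {n : ℕ} {Γ Δ : Multiset (Fm L)} {A B : Fm L} :
      DerI rp n (A ::ₘ Γ) {B} → DerI rp (n + 1) Γ (Fm.imp A B ::ₘ Δ)
  | allL {n : ℕ} {Γ Δ : Multiset (Fm L)} {x : ℕ} {t : L.Term ℕ} {A : Fm L}
      (hf : Fm.freeFor t x A) :
      DerI rp n (A.subst x t ::ₘ Fm.all x A ::ₘ Γ) Δ → DerI rp (n + 1) (Fm.all x A ::ₘ Γ) Δ
  | allR {n : ℕ} {Γ Δ : Multiset (Fm L)} {x y : ℕ} {A : Fm L}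
      (hf : Fm.freeFor (Term.var y) x A) (hy : y ∉ (Fm.all x A).freeVars)
      (hΓ : ∀ C ∈ Γ, y ∉ Fm.freeVars C) :
      DerI rp n Γ {A.subst x (Term.var y)} → DerI rp (n + 1) Γ (Fm.all x A ::ₘ Δ)
  | exL {n : ℕ} {Γ Δ : Multiset (Fm L)} {x y : ℕ} {A : Fm L}
      (hf : Fm.freeFor (Term.var y) x A) (hy : y ∉ (Fm.ex x A).freeVars)
      (hΓ : ∀ C ∈ Γ, y ∉ Fm.freeVars C) (hΔ : ∀ C ∈ Δ, y ∉ Fm.freeVars C) :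
      DerI rp n (A.subst x (Term.var y) ::ₘ Γ) Δ → DerI rp (n + 1) (Fm.ex x A ::ₘ Γ) Δ
  | exR {n : ℕ} {Γ Δ : Multiset (Fm L)} {x : ℕ} {t : L.Term ℕ} {A : Fm L}
      (hf : Fm.freeFor t x A) :
      DerI rp n Γ (A.subst x t ::ₘ Fm.ex x A ::ₘ Δ) → DerI rp (n + 1) Γ (Fm.ex x A ::ₘ Δ)
  | ref {n : ℕ} {Γ Δ : Multiset (Fm L)} (t : L.Term ℕ) :
      DerI rp n (Fm.equal t t ::ₘ Γ) Δ → DerI rp (n + 1) Γ Δ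
  | repl {n : ℕ} {Γp Γc Δ : Multiset (Fm L)} (h : rp Γp Γc) :
      DerI rp n Γp Δ → DerI rp (n + 1) Γc Δ


/-- One application of the rule Repl₁⁻, as a relation on sequents
(premiss to conclusion). -/
def Repl1MinusStep (L : FirstOrder.Language.{u, v})
    (S S' : Multiset (Fm L) × Multiset (Fm L)) : Prop :=
  ReplMinus1 L S.1 S'.1 ∧ S.2 = S'.2

/-- `iterRel R n a b`: `b` is obtained from `a` by exactly `n` applications of `R`. -/
def iterRel {α : Type*} (R : α → α → Prop) : ℕ → α → α → Prop
  | 0 => fun a b => a = b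
  | n + 1 => fun a c => ∃ b, R a b ∧ iterRel R n b c

lemma tCount_subst_eq (a w : ℕ) (u : L.Term ℕ) (haw : a ≠ w) (hu : tCount a u = 0) :
    ∀ t : L.Term ℕ, tCount a (t.subst (Function.update Term.var w u)) = tCount a t
  | .var x => by
    by_cases h : x = w
    · subst h
      simp [Function.update_self, hu, tCount, haw.symm]
    · simp [Function.update_of_ne h, tCount]
  | .func f ts => by
    simp only [Term.subst, tCount]
    exact Finset.sum_congr rfl fun i _ => tCount_subst_eq a w u haw hu (ts i)

lemma subst_eq_self (w : ℕ) (u : L.Term ℕ) :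
    ∀ t : L.Term ℕ, tCount w t = 0 → t.subst (Function.update Term.var w u) = t
  | .var x, h => by
    have : x ≠ w := by intro hx; subst hx; simp [tCount] at h
    simp [Function.update_of_ne this]
  | .func f ts, h => by
    simp only [tCount, Finset.sum_eq_zero_iff, Finset.mem_univ, true_implies] at h
    simp only [Term.subst, Term.func.injEq, heq_eq_eq, true_and]
    exact funext fun i => subst_eq_self w u (ts i) (h i)

lemma subst_subst_term (σ τ ρ : ℕ → L.Term ℕ) (h : ∀ x, (σ x).subst τ = ρ x) :
    ∀ t : L.Term ℕ, (t.subst σ).subst τ = t.subst ρ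
  | .var x => h x
  | .func f ts => by
    simp only [Term.subst, Term.func.injEq, heq_eq_eq, true_and]
    exact funext fun i => subst_subst_term σ τ ρ h (ts i)

def tSup : L.Term ℕ → ℕ
  | .var x => x + 1
  | .func _ ts => Finset.univ.sup fun i => tSup (ts i)

lemma tCount_eq_zero_of_le : ∀ (t : L.Term ℕ) (w : ℕ), tSup t ≤ w → tCount w t = 0
  | .var x, w, h => by
    simp only [tSup] at h
    simp [tCount]; omega
  | .func f ts, w, h => by
    simp only [tSup, Finset.sup_le_iff, Finset.mem_univ, true_implies] at h
    simp only [tCount, Finset.sum_eq_zero_iff, Finset.mem_univ, true_implies]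
    exact fun i => tCount_eq_zero_of_le (ts i) w (h i)

lemma term_decomp (vv w : ℕ) (hvw : w ≠ vv) :
    ∀ t : L.Term ℕ, tCount vv t ≠ 0 → tCount w t = 0 →
    ∃ t' : L.Term ℕ, tCount vv t' = tCount vv t - 1 ∧ tCount w t' = 1 ∧
      t'.subst (Function.update Term.var w (Term.var vv)) = t
  | .var x, hv, hw => by
    have hx : x = vv := by by_contra h; simp [tCount, h] at hv
    subst hx
    refine ⟨Term.var w, ?_, ?_, ?_⟩
    · simp [tCount, hvw]
    · simp [tCount]
    · simp [Function.update_self]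
  | .func f ts, hv, hw => by
    simp only [tCount, Finset.sum_eq_zero_iff, Finset.mem_univ, true_implies] at hw
    have : ∃ i, tCount vv (ts i) ≠ 0 := by
      by_contra h
      push_neg at h
      exact hv (by simp only [tCount]; exact Finset.sum_eq_zero fun i _ => h i)
    obtain ⟨i, hi⟩ := this
    obtain ⟨t', h1, h2, h3⟩ := term_decomp vv w hvw (ts i) hi (hw i)
    refine ⟨Term.func f (Function.update ts i t'), ?_, ?_, ?_⟩
    · simp only [tCount]
      rw [← Finset.add_sum_erase _ (fun j => tCount vv (Function.update ts i t' j)) (Finset.mem_univ i),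
        ← Finset.add_sum_erase _ (fun j => tCount vv (ts j)) (Finset.mem_univ i),
        Finset.sum_congr rfl (fun j hj => by
          rw [Function.update_of_ne (Finset.ne_of_mem_erase hj)])]
      simp only [Function.update_self]
      omega
    · simp only [tCount]
      rw [← Finset.add_sum_erase _ (fun j => tCount w (Function.update ts i t' j)) (Finset.mem_univ i)]
      have hz : (∑ j ∈ Finset.univ.erase i, tCount w (Function.update ts i t' j)) = 0 :=
        Finset.sum_eq_zero fun j hj => by
          rw [Function.update_of_ne (Finset.ne_of_mem_erase hj)]; exact hw j
      simp [h2, hz]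
    · simp only [Term.subst, Term.func.injEq, heq_eq_eq, true_and]
      funext j
      by_cases hj : j = i
      · subst hj; simp [h3]
      · simp only [Function.update_of_ne hj]
        exact subst_eq_self w _ (ts j) (hw j)


lemma isAtomic_ssub {P : Fm L} (hP : P.IsAtomic) (σ : ℕ → L.Term ℕ) :
    (P.ssub σ).IsAtomic := by
  cases hP with
  | equal t₁ t₂ => exact Fm.IsAtomic.equal _ _
  | rel R ts => exact Fm.IsAtomic.rel _ _

lemma fCount_subst_eq (a w : ℕ) (haw : a ≠ w) (u : L.Term ℕ) (hu : tCount a u = 0)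
    {P : Fm L} (hP : P.IsAtomic) : Fm.fCount a (P.subst w u) = Fm.fCount a P := by
  cases hP with
  | equal t₁ t₂ =>
    simp only [Fm.subst, Fm.ssub, Fm.fCount, tCount_subst_eq a w u haw hu]
  | rel R ts =>
    simp only [Fm.subst, Fm.ssub, Fm.fCount, tCount_subst_eq a w u haw hu]

lemma atomic_subst_eq_self (w : ℕ) (u : L.Term ℕ) {P : Fm L} (hP : P.IsAtomic)
    (h : Fm.fCount w P = 0) : P.subst w u = P := by
  cases hP with
  | equal t₁ t₂ =>
    simp only [Fm.fCount, Nat.add_eq_zero] at h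
    simp only [Fm.subst, Fm.ssub, subst_eq_self w u t₁ h.1, subst_eq_self w u t₂ h.2]
  | rel R ts =>
    simp only [Fm.fCount, Finset.sum_eq_zero_iff, Finset.mem_univ, true_implies] at h
    simp only [Fm.subst, Fm.ssub, Fm.rel.injEq, heq_eq_eq, true_and]
    exact funext fun i => subst_eq_self w u (ts i) (h i)

lemma atomic_ssub_ssub {P : Fm L} (hP : P.IsAtomic) (σ τ ρ : ℕ → L.Term ℕ)
    (h : ∀ x, (σ x).subst τ = ρ x) : (P.ssub σ).ssub τ = P.ssub ρ := by
  cases hP with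
  | equal t₁ t₂ =>
    simp only [Fm.ssub, subst_subst_term σ τ ρ h]
  | rel R ts =>
    simp only [Fm.ssub, subst_subst_term σ τ ρ h]

lemma atomic_decomp (vv w : ℕ) (hvw : w ≠ vv) {P : Fm L} (hP : P.IsAtomic)
    (hv : Fm.fCount vv P ≠ 0) (hw : Fm.fCount w P = 0) :
    ∃ Q : Fm L, Q.IsAtomic ∧ Fm.fCount vv Q = Fm.fCount vv P - 1 ∧ Fm.fCount w Q = 1 ∧
      Q.subst w (Term.var vv) = P := by
  cases hP with
  | equal t₁ t₂ =>
    simp only [Fm.fCount, Nat.add_eq_zero] at hw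
    by_cases h1 : tCount vv t₁ ≠ 0
    · obtain ⟨t', c1, c2, c3⟩ := term_decomp vv w hvw t₁ h1 hw.1
      refine ⟨Fm.equal t' t₂, Fm.IsAtomic.equal _ _, ?_, ?_, ?_⟩
      · simp only [Fm.fCount] at hv ⊢; omega
      · simp only [Fm.fCount, c2, hw.2]
      · simp only [Fm.subst, Fm.ssub, c3, subst_eq_self w _ t₂ hw.2]
    · push_neg at h1
      have h2 : tCount vv t₂ ≠ 0 := by simp only [Fm.fCount] at hv; omega
      obtain ⟨t', c1, c2, c3⟩ := term_decomp vv w hvw t₂ h2 hw.2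
      refine ⟨Fm.equal t₁ t', Fm.IsAtomic.equal _ _, ?_, ?_, ?_⟩
      · simp only [Fm.fCount] at hv ⊢; omega
      · simp only [Fm.fCount, c2, hw.1]
      · simp only [Fm.subst, Fm.ssub, c3, subst_eq_self w _ t₁ hw.1]
  | rel R ts =>
    simp only [Fm.fCount, Finset.sum_eq_zero_iff, Finset.mem_univ, true_implies] at hw
    have : ∃ i, tCount vv (ts i) ≠ 0 := by
      by_contra h
      push_neg at h
      exact hv (by simp only [Fm.fCount]; exact Finset.sum_eq_zero fun i _ => h i)
    obtain ⟨i, hi⟩ := this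
    obtain ⟨t', c1, c2, c3⟩ := term_decomp vv w hvw (ts i) hi (hw i)
    refine ⟨Fm.rel R (Function.update ts i t'), Fm.IsAtomic.rel _ _, ?_, ?_, ?_⟩
    · simp only [Fm.fCount]
      rw [← Finset.add_sum_erase _ (fun j => tCount vv (Function.update ts i t' j)) (Finset.mem_univ i),
        ← Finset.add_sum_erase _ (fun j => tCount vv (ts j)) (Finset.mem_univ i),
        Finset.sum_congr rfl (fun j hj => by
          rw [Function.update_of_ne (Finset.ne_of_mem_erase hj)])]
      simp only [Function.update_self]
      have hi1 : 1 ≤ tCount vv (ts i) := Nat.one_le_iff_ne_zero.2 hi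
      omega
    · simp only [Fm.fCount]
      rw [← Finset.add_sum_erase _ (fun j => tCount w (Function.update ts i t' j)) (Finset.mem_univ i)]
      have hz : (∑ j ∈ Finset.univ.erase i, tCount w (Function.update ts i t' j)) = 0 :=
        Finset.sum_eq_zero fun j hj => by
          rw [Function.update_of_ne (Finset.ne_of_mem_erase hj)]; exact hw j
      simp [c2, hz]
    · simp only [Fm.subst, Fm.ssub, Fm.rel.injEq, heq_eq_eq, true_and]
      funext j
      by_cases hj : j = i
      · subst hj; simp [c3]
      · simp only [Function.update_of_ne hj]
        exact subst_eq_self w _ (ts j) (hw j)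

lemma exists_fresh (s r : L.Term ℕ) (vv : ℕ) {P : Fm L} (hP : P.IsAtomic) :
    ∃ w, w ≠ vv ∧ tCount w s = 0 ∧ tCount w r = 0 ∧ Fm.fCount w P = 0 := by
  have key : ∃ b, ∀ w, b ≤ w → Fm.fCount w P = 0 := by
    cases hP with
    | equal t₁ t₂ =>
      exact ⟨max (tSup t₁) (tSup t₂), fun w hw => by
        simp only [Fm.fCount, tCount_eq_zero_of_le t₁ w (le_trans (le_max_left _ _) hw),
          tCount_eq_zero_of_le t₂ w (le_trans (le_max_right _ _) hw)]⟩
    | rel R ts =>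
      refine ⟨Finset.univ.sup fun i => tSup (ts i), fun w hw => ?_⟩
      simp only [Fm.fCount, Finset.sum_eq_zero_iff, Finset.mem_univ, true_implies]
      exact fun i => tCount_eq_zero_of_le (ts i) w
        (le_trans (Finset.le_sup (f := fun i => tSup (ts i)) (Finset.mem_univ i)) hw)
  obtain ⟨b, hb⟩ := key
  refine ⟨max (max (tSup s) (tSup r)) (max b (vv + 1)), ?_, ?_, ?_, ?_⟩
  · omega
  · exact tCount_eq_zero_of_le s _ (by omega)
  · exact tCount_eq_zero_of_le r _ (by omega)
  · exact hb _ (by omega)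

/-- In the calculus consisting solely of the rule Repl₁⁻, the rule Repl⁻ is derivable:
for every atomic formula `P`, terms `s`, `r`, variable `v` not occurring in `s` or `r`,
and finite multisets `Γ`, `Δ`, the sequent `s = r, P[v/s], Γ ⇒ Δ` is obtained from
`s = r, P[v/r], Γ ⇒ Δ` by finitely many applications of Repl₁⁻, the number of
applications being the number of occurrences of `v` in `P`. -/
theorem replMinus_derivable_from_repl1Minus (L : FirstOrder.Language.{u, v})
    (P : Fm L) (hP : P.IsAtomic) (s r : L.Term ℕ) (v : ℕ)
    (hs : tCount v s = 0) (hr : tCount v r = 0) (Γ Δ : Multiset (Fm L)) :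
    iterRel (Repl1MinusStep L) (Fm.fCount v P)
      (Fm.equal s r ::ₘ P.subst v r ::ₘ Γ, Δ)
      (Fm.equal s r ::ₘ P.subst v s ::ₘ Γ, Δ) := by
  suffices H : ∀ (n : ℕ) (P : Fm L), P.IsAtomic → Fm.fCount v P = n →
      iterRel (Repl1MinusStep L) n
        (Fm.equal s r ::ₘ P.subst v r ::ₘ Γ, Δ)
        (Fm.equal s r ::ₘ P.subst v s ::ₘ Γ, Δ) from H _ P hP rfl
  intro n
  induction n with
  | zero =>
    intro P hP hn
    show _ = _
    rw [atomic_subst_eq_self v r hP hn, atomic_subst_eq_self v s hP hn]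
  | succ n ih =>
    intro P hP hn
    obtain ⟨w, hwv, hws, hwr, hwP⟩ := exists_fresh s r v hP
    obtain ⟨Q, hQ, hQv, hQw, hQP⟩ := atomic_decomp v w hwv hP (by omega) hwP
    set σwv : ℕ → L.Term ℕ := Function.update Term.var w (Term.var v) with hσwv
    set σvr : ℕ → L.Term ℕ := Function.update Term.var v r with hσvr
    set σwr : ℕ → L.Term ℕ := Function.update Term.var w r with hσwr
    set σws : ℕ → L.Term ℕ := Function.update Term.var w s with hσws
    set σvs : ℕ → L.Term ℕ := Function.update Term.var v s with hσvs
    have e1 : ∀ x, (σwv x).subst σvr = (if x = w then r else if x = v then r else Term.var x) := by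
      intro x
      by_cases h : x = w
      · rw [h, hσwv, Function.update_self, if_pos rfl]
        simp only [Term.subst]
        rw [hσvr, Function.update_self]
      · rw [hσwv, Function.update_of_ne h, if_neg h]
        simp only [Term.subst]
        by_cases h2 : x = v
        · rw [h2, hσvr, Function.update_self, if_pos rfl]
        · rw [hσvr, Function.update_of_ne h2, if_neg h2]
    have e2 : ∀ x, (σvr x).subst σwr = (if x = w then r else if x = v then r else Term.var x) := by
      intro x
      by_cases h2 : x = v
      · rw [h2, hσvr, Function.update_self, hσwr, subst_eq_self w r r hwr,
          if_neg (Ne.symm hwv), if_pos rfl]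
      · rw [hσvr, Function.update_of_ne h2]
        simp only [Term.subst]
        by_cases h : x = w
        · rw [h, hσwr, Function.update_self, if_pos rfl]
        · rw [hσwr, Function.update_of_ne h, if_neg h, if_neg h2]
    have e3 : ∀ x, (σvr x).subst σws = (if x = v then r else if x = w then s else Term.var x) := by
      intro x
      by_cases h2 : x = v
      · rw [h2, hσvr, Function.update_self, hσws, subst_eq_self w s r hwr, if_pos rfl]
      · rw [hσvr, Function.update_of_ne h2, if_neg h2]
        simp only [Term.subst]
        by_cases h : x = w
        · rw [h, hσws, Function.update_self, if_pos rfl]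
        · rw [hσws, Function.update_of_ne h, if_neg h]
    have e4 : ∀ x, (σws x).subst σvr = (if x = v then r else if x = w then s else Term.var x) := by
      intro x
      by_cases h : x = w
      · rw [h, hσws, Function.update_self, hσvr, subst_eq_self v r s hs,
          if_neg hwv, if_pos rfl]
      · rw [hσws, Function.update_of_ne h]
        simp only [Term.subst]
        by_cases h2 : x = v
        · rw [h2, hσvr, Function.update_self, if_pos rfl]
        · rw [hσvr, Function.update_of_ne h2, if_neg h2, if_neg h]
    have e5 : ∀ x, (σws x).subst σvs = (if x = w then s else if x = v then s else Term.var x) := by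
      intro x
      by_cases h : x = w
      · rw [h, hσws, Function.update_self, hσvs, subst_eq_self v s s hs, if_pos rfl]
      · rw [hσws, Function.update_of_ne h, if_neg h]
        simp only [Term.subst]
        by_cases h2 : x = v
        · rw [h2, hσvs, Function.update_self, if_pos rfl]
        · rw [hσvs, Function.update_of_ne h2, if_neg h2]
    have e6 : ∀ x, (σwv x).subst σvs = (if x = w then s else if x = v then s else Term.var x) := by
      intro x
      by_cases h : x = w
      · rw [h, hσwv, Function.update_self, if_pos rfl]
        simp only [Term.subst]
        rw [hσvs, Function.update_self]
      · rw [hσwv, Function.update_of_ne h, if_neg h]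
        simp only [Term.subst]
        by_cases h2 : x = v
        · rw [h2, hσvs, Function.update_self, if_pos rfl]
        · rw [hσvs, Function.update_of_ne h2, if_neg h2]
    have id1 : P.subst v r = (Q.subst v r).subst w r := by
      conv_lhs => rw [← hQP]
      show (Q.ssub σwv).ssub σvr = (Q.ssub σvr).ssub σwr
      rw [atomic_ssub_ssub hQ σwv σvr (fun x => if x = w then r else if x = v then r else Term.var x) e1, atomic_ssub_ssub hQ σvr σwr (fun x => if x = w then r else if x = v then r else Term.var x) e2]
    have id2 : (Q.subst v r).subst w s = (Q.subst w s).subst v r := by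
      show (Q.ssub σvr).ssub σws = (Q.ssub σws).ssub σvr
      rw [atomic_ssub_ssub hQ σvr σws (fun x => if x = v then r else if x = w then s else Term.var x) e3, atomic_ssub_ssub hQ σws σvr (fun x => if x = v then r else if x = w then s else Term.var x) e4]
    have id3 : (Q.subst w s).subst v s = P.subst v s := by
      conv_rhs => rw [← hQP]
      show (Q.ssub σws).ssub σvs = (Q.ssub σwv).ssub σvs
      rw [atomic_ssub_ssub hQ σws σvs (fun x => if x = w then s else if x = v then s else Term.var x) e5, atomic_ssub_ssub hQ σwv σvs (fun x => if x = w then s else if x = v then s else Term.var x) e6]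
    have hP1 : Fm.fCount w (Q.subst v r) = 1 := by
      rw [fCount_subst_eq w v hwv r hwr hQ]; exact hQw
    have hP2 : Fm.fCount v (Q.subst w s) = n := by
      rw [fCount_subst_eq v w (Ne.symm hwv) s hs hQ]; omega
    refine ⟨(Fm.equal s r ::ₘ (Q.subst v r).subst w s ::ₘ Γ, Δ),
      ⟨⟨s, r, w, Q.subst v r, Γ, isAtomic_ssub hQ _, hws, hwr, hP1, ?_, rfl⟩, rfl⟩, ?_⟩
    · rw [id1]
    · rw [id2, ← id3]
      exact ih (Q.subst w s) (isAtomic_ssub hQ _) hP2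
end

section
/- The contraction rule for equalities, Contr^=, is derivable in G3c₁^=⁻: for all terms s, r and finite multisets Γ, Δ of formulas, the sequent s = r, Γ ⇒ Δ can be derived from the sequent s = r, s = r, Γ ⇒ Δ by one application of Repl₁⁻ followed by one application of Ref. -/
open FirstOrder Language Multiset

universe u v

variable {L : FirstOrder.Language.{u, v}}

lemma tCount_eq_zero_of_notMem_varFinset {v : ℕ} :
    ∀ (t : L.Term ℕ), v ∉ t.varFinset → tCount v t = 0
  | .var w, h => by
      simp [Term.varFinset] at h
      simp [tCount, Ne.symm h]
  | .func f ts, h => by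
      simp only [Term.varFinset, Finset.mem_biUnion, Finset.mem_univ, true_and, not_exists] at h
      simp only [tCount]
      exact Finset.sum_eq_zero fun i _ => tCount_eq_zero_of_notMem_varFinset (ts i) (h i)

lemma subst_update_eq_self {v : ℕ} {u : L.Term ℕ} :
    ∀ (t : L.Term ℕ), tCount v t = 0 →
      t.subst (Function.update (Term.var : ℕ → L.Term ℕ) v u) = t
  | .var w, h => by
      simp [tCount] at h
      simp [Term.subst, Function.update, h]
  | .func f ts, h => by
      simp only [tCount, Finset.sum_eq_zero_iff, Finset.mem_univ, forall_true_left] at h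
      simp only [Term.subst]
      congr 1
      funext i
      exact subst_update_eq_self (ts i) (h i)


/-- The contraction rule for equalities Contr^= is derivable in `G3c₁^=⁻`: from a
derivation of `s = r, s = r, Γ ⇒ Δ` one obtains a derivation of `s = r, Γ ⇒ Δ` by one
application of Repl₁⁻ followed by one application of Ref (hence with height increased
by two). -/
theorem contrEq_derivable_G3c1EqMinus (L : FirstOrder.Language.{u, v})
    (s r : L.Term ℕ) (Γ Δ : Multiset (Fm L)) (n : ℕ)
    (hd : DerC (ReplMinus1 L) n (Fm.equal s r ::ₘ Fm.equal s r ::ₘ Γ) Δ) :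
    DerC (ReplMinus1 L) (n + 2) (Fm.equal s r ::ₘ Γ) Δ := by
  classical
  obtain ⟨v, hv⟩ : ∃ v, v ∉ s.varFinset ∪ r.varFinset :=
    Finset.exists_notMem _
  simp only [Finset.mem_union, not_or] at hv
  have hvs : tCount v s = 0 := tCount_eq_zero_of_notMem_varFinset s hv.1
  have hvr : tCount v r = 0 := tCount_eq_zero_of_notMem_varFinset r hv.2
  apply DerC.ref s
  have hswap : (Fm.equal s s ::ₘ Fm.equal s r ::ₘ Γ : Multiset (Fm L))
      = Fm.equal s r ::ₘ Fm.equal s s ::ₘ Γ := Multiset.cons_swap _ _ _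
  rw [hswap]
  apply DerC.repl (Γp := Fm.equal s r ::ₘ Fm.equal s r ::ₘ Γ)
  · refine ⟨s, r, v, Fm.equal s (Term.var v), Γ, Fm.IsAtomic.equal _ _, hvs, hvr, ?_, ?_, ?_⟩
    · simp [Fm.fCount, tCount, hvs]
    · congr 1
      simp [Fm.subst, Fm.ssub, subst_update_eq_self s hvs, Term.subst, Function.update]
    · congr 1
      simp [Fm.subst, Fm.ssub, subst_update_eq_self s hvs, Term.subst, Function.update]
  · exact hd
end

section
/- The symmetry rule Symm is admissible in G3c₁^=⁻: for all terms s, r and finite multisets Γ, Δ of formulas, if the sequent s = r, Γ ⇒ Δ is derivable in G3c₁^=⁻, then the sequent r = s, Γ ⇒ Δ is derivable in G3c₁^=⁻. -/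
open FirstOrder Language Multiset

universe u v

variable {L : FirstOrder.Language.{u, v}}

section Helpers

variable {L : FirstOrder.Language.{u, v}}

/-- Height monotonicity (successor step). -/
lemma DerC_succ {rp : Multiset (Fm L) → Multiset (Fm L) → Prop} {n : ℕ}
    {Γ Δ : Multiset (Fm L)} (h : DerC rp n Γ Δ) : DerC rp (n + 1) Γ Δ := by
  induction h with
  | ax hP => exact DerC.ax hP
  | botL => exact DerC.botL
  | andL _ ih => exact DerC.andL ih
  | andR _ _ ih1 ih2 => exact DerC.andR ih1 ih2
  | orL _ _ ih1 ih2 => exact DerC.orL ih1 ih2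
  | orR _ ih => exact DerC.orR ih
  | impL _ _ ih1 ih2 => exact DerC.impL ih1 ih2
  | impR _ ih => exact DerC.impR ih
  | allL hf _ ih => exact DerC.allL hf ih
  | allR hf hy hΓ hΔ _ ih => exact DerC.allR hf hy hΓ hΔ ih
  | exL hf hy hΓ hΔ _ ih => exact DerC.exL hf hy hΓ hΔ ih
  | exR hf _ ih => exact DerC.exR hf ih
  | ref t _ ih => exact DerC.ref t ih
  | repl hr _ ih => exact DerC.repl hr ih

lemma DerC_mono {rp : Multiset (Fm L) → Multiset (Fm L) → Prop} {n m : ℕ}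
    {Γ Δ : Multiset (Fm L)} (h : DerC rp n Γ Δ) (hnm : n ≤ m) : DerC rp m Γ Δ := by
  induction m with
  | zero => exact (Nat.le_zero.mp hnm) ▸ h
  | succ k ih =>
    rcases Nat.le_succ_iff.mp hnm with h' | rfl
    · exact DerC_succ (ih h')
    · exact h

lemma tsum_ne {k : ℕ} {f : Fin k → ℕ} (i : Fin k) (hi : f i ≠ 0) :
    Finset.univ.sum f ≠ 0 := fun hc => hi (Finset.sum_eq_zero_iff.mp hc i (Finset.mem_univ i))

/-- If `w` occurs in `t.subst σ`, it comes from some `u` in `t` with `w` in `σ u`. -/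
lemma tCount_subst_ne {w : ℕ} {σ : ℕ → L.Term ℕ} :
    ∀ {t : L.Term ℕ}, tCount w (t.subst σ) ≠ 0 →
      ∃ u, tCount u t ≠ 0 ∧ tCount w (σ u) ≠ 0
  | .var z, h => ⟨z, by simp [tCount], by simpa using h⟩
  | .func f ts, h => by
      rw [Term.subst, tCount] at h
      obtain ⟨i, -, hi⟩ := Finset.exists_ne_zero_of_sum_ne_zero h
      obtain ⟨u, hu, hw⟩ := tCount_subst_ne hi
      exact ⟨u, tsum_ne i hu, hw⟩

/-- Conversely, an occurrence of `u` in `t` and of `w` in `σ u` yields `w` in `t.subst σ`. -/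
lemma tCount_subst_of {w u : ℕ} {σ : ℕ → L.Term ℕ} :
    ∀ {t : L.Term ℕ}, tCount u t ≠ 0 → tCount w (σ u) ≠ 0 →
      tCount w (t.subst σ) ≠ 0
  | .var z, h1, h2 => by
      have : z = u := by by_contra hc; simp [tCount, hc] at h1
      subst this; simpa using h2
  | .func f ts, h1, h2 => by
      rw [tCount] at h1
      obtain ⟨i, -, hi⟩ := Finset.exists_ne_zero_of_sum_ne_zero h1
      rw [Term.subst, tCount]
      exact tsum_ne i (tCount_subst_of hi h2)

end Helpers
section Helpers2

variable {L : FirstOrder.Language.{u, v}}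

lemma mem_freeVars {w : ℕ} : ∀ {A : Fm L}, w ∈ A.freeVars ↔ Fm.fCount w A ≠ 0
  | .falsum => by simp [Fm.freeVars, Fm.fCount]
  | .equal t₁ t₂ => by
      simp only [Fm.freeVars, Fm.fCount, Set.mem_setOf_eq]; omega
  | .rel R ts => by
      simp only [Fm.freeVars, Fm.fCount, Set.mem_setOf_eq, ne_eq,
        Finset.sum_eq_zero_iff, Finset.mem_univ, forall_true_left, not_forall]
  | .and A B => by
      simp only [Fm.freeVars, Fm.fCount, Set.mem_union,
        mem_freeVars (A := A), mem_freeVars (A := B)]; omega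
  | .or A B => by
      simp only [Fm.freeVars, Fm.fCount, Set.mem_union,
        mem_freeVars (A := A), mem_freeVars (A := B)]; omega
  | .imp A B => by
      simp only [Fm.freeVars, Fm.fCount, Set.mem_union,
        mem_freeVars (A := A), mem_freeVars (A := B)]; omega
  | .all y A => by
      simp only [Fm.freeVars, Fm.fCount, Set.mem_diff, Set.mem_singleton_iff,
        mem_freeVars (A := A)]
      by_cases h : y = w <;> simp [h] <;> omega
  | .ex y A => by
      simp only [Fm.freeVars, Fm.fCount, Set.mem_diff, Set.mem_singleton_iff,
        mem_freeVars (A := A)]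
      by_cases h : y = w <;> simp [h] <;> omega

/-- A variable-for-variable substitution fixing `w` preserves freeness of `w`. -/
lemma fCount_ssub_var {w : ℕ} : ∀ {A : Fm L} {σ : ℕ → L.Term ℕ},
    (∀ u, ∃ z, σ u = Term.var z) → σ w = Term.var w →
    Fm.fCount w A ≠ 0 → Fm.fCount w (A.ssub σ) ≠ 0
  | .falsum, _, _, _, h => by simp [Fm.fCount] at h
  | .equal t₁ t₂, σ, hσ, hw, h => by
      rw [Fm.fCount] at h
      rw [Fm.ssub, Fm.fCount]
      have hww : tCount w (σ w) ≠ 0 := by rw [hw]; simp [tCount]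
      rcases Nat.eq_zero_or_pos (tCount w t₁) with h1 | h1
      · have h2 : tCount w t₂ ≠ 0 := by omega
        have := tCount_subst_of (σ := σ) (t := t₂) h2 hww
        omega
      · have := tCount_subst_of (σ := σ) (t := t₁) (by omega) hww
        omega
  | .rel R ts, σ, hσ, hw, h => by
      rw [Fm.fCount] at h
      obtain ⟨i, -, hi⟩ := Finset.exists_ne_zero_of_sum_ne_zero h
      rw [Fm.ssub, Fm.fCount]
      have hww : tCount w (σ w) ≠ 0 := by rw [hw]; simp [tCount]
      exact tsum_ne i (tCount_subst_of hi hww)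
  | .and A B, σ, hσ, hw, h => by
      rw [Fm.fCount] at h; rw [Fm.ssub, Fm.fCount]
      rcases Nat.eq_zero_or_pos (Fm.fCount w A) with h1 | h1
      · have := fCount_ssub_var (A := B) hσ hw (by omega); omega
      · have := fCount_ssub_var (A := A) hσ hw (by omega); omega
  | .or A B, σ, hσ, hw, h => by
      rw [Fm.fCount] at h; rw [Fm.ssub, Fm.fCount]
      rcases Nat.eq_zero_or_pos (Fm.fCount w A) with h1 | h1
      · have := fCount_ssub_var (A := B) hσ hw (by omega); omega
      · have := fCount_ssub_var (A := A) hσ hw (by omega); omega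
  | .imp A B, σ, hσ, hw, h => by
      rw [Fm.fCount] at h; rw [Fm.ssub, Fm.fCount]
      rcases Nat.eq_zero_or_pos (Fm.fCount w A) with h1 | h1
      · have := fCount_ssub_var (A := B) hσ hw (by omega); omega
      · have := fCount_ssub_var (A := A) hσ hw (by omega); omega
  | .all y A, σ, hσ, hw, h => by
      rw [Fm.fCount] at h
      have hyw : ¬ y = w := by intro e; simp [e] at h
      rw [Fm.ssub, Fm.fCount, if_neg hyw]
      rw [if_neg hyw] at h
      refine fCount_ssub_var (A := A) ?_ ?_ h
      · intro u
        by_cases hu : u = y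
        · exact ⟨y, by rw [hu, Function.update_self]⟩
        · obtain ⟨z, hz⟩ := hσ u
          exact ⟨z, by simp [Function.update_of_ne hu, hz]⟩
      · rw [Function.update_of_ne (by intro e; exact hyw e.symm), hw]
  | .ex y A, σ, hσ, hw, h => by
      rw [Fm.fCount] at h
      have hyw : ¬ y = w := by intro e; simp [e] at h
      rw [Fm.ssub, Fm.fCount, if_neg hyw]
      rw [if_neg hyw] at h
      refine fCount_ssub_var (A := A) ?_ ?_ h
      · intro u
        by_cases hu : u = y
        · exact ⟨y, by rw [hu, Function.update_self]⟩
        · obtain ⟨z, hz⟩ := hσ u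
          exact ⟨z, by simp [Function.update_of_ne hu, hz]⟩
      · rw [Function.update_of_ne (by intro e; exact hyw e.symm), hw]

lemma fCount_subst_var {w x y : ℕ} {A : Fm L} (hwx : w ≠ x)
    (h : Fm.fCount w A ≠ 0) : Fm.fCount w (A.subst x (Term.var y)) ≠ 0 := by
  refine fCount_ssub_var ?_ ?_ h
  · intro u
    by_cases hu : u = x
    · exact ⟨y, by rw [hu, Function.update_self]⟩
    · exact ⟨u, by simp [Function.update_of_ne hu]⟩
  · rw [Function.update_of_ne hwx]

/-- Every term has a bound beyond which no variable occurs in it. -/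
lemma tBound : ∀ (t : L.Term ℕ), ∃ N, ∀ w, N ≤ w → tCount w t = 0 := by
  intro t
  induction t with
  | var z => exact ⟨z + 1, fun w hw => by simp [tCount]; omega⟩
  | func f ts ih =>
      choose N hN using ih
      refine ⟨Finset.univ.sup N, fun w hw => ?_⟩
      rw [tCount]
      refine Finset.sum_eq_zero fun i _ => ?_
      exact hN i w (le_trans (Finset.le_sup (Finset.mem_univ i)) hw)

/-- Substituting for an absent variable does nothing. -/
lemma subst_id {w : ℕ} {u : L.Term ℕ} :
    ∀ {t : L.Term ℕ}, tCount w t = 0 → t.subst (Function.update Term.var w u) = t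
  | .var z, h => by
      have : ¬ z = w := by intro e; simp [tCount, e] at h
      simp [Function.update_of_ne this]
  | .func f ts, h => by
      rw [tCount] at h
      rw [Term.subst]
      congr 1
      funext i
      exact subst_id (Finset.sum_eq_zero_iff.mp h i (Finset.mem_univ i))

/-- Key replacement-invariance: a variable free in `P[v/s]` is free in `s` or in `P[v/r]`. -/
lemma fCount_subst_atomic {P : Fm L} (hP : P.IsAtomic) {v w : ℕ} {s' r' : L.Term ℕ}
    (h : Fm.fCount w (P.subst v s') ≠ 0) :
    tCount w s' ≠ 0 ∨ Fm.fCount w (P.subst v r') ≠ 0 := by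
  have key : ∀ t : L.Term ℕ, tCount w (t.subst (Function.update Term.var v s')) ≠ 0 →
      tCount w s' ≠ 0 ∨ tCount w (t.subst (Function.update Term.var v r')) ≠ 0 := by
    intro t ht
    obtain ⟨u, hu, hw⟩ := tCount_subst_ne ht
    by_cases huv : u = v
    · subst huv; left; simpa using hw
    · right
      refine tCount_subst_of hu ?_
      rw [Function.update_of_ne huv] at hw ⊢
      exact hw
  cases hP with
  | equal t₁ t₂ =>
      rw [Fm.subst, Fm.ssub, Fm.fCount] at h
      rcases Nat.eq_zero_or_pos (tCount w (t₁.subst (Function.update Term.var v s'))) with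
        h1 | h1
      · rcases key t₂ (by omega) with hk | hk
        · exact Or.inl hk
        · right; rw [Fm.subst, Fm.ssub, Fm.fCount]; omega
      · rcases key t₁ (by omega) with hk | hk
        · exact Or.inl hk
        · right; rw [Fm.subst, Fm.ssub, Fm.fCount]; omega
  | rel R ts =>
      rw [Fm.subst, Fm.ssub, Fm.fCount] at h
      obtain ⟨i, -, hi⟩ := Finset.exists_ne_zero_of_sum_ne_zero h
      rcases key (ts i) hi with hk | hk
      · exact Or.inl hk
      · right; rw [Fm.subst, Fm.ssub, Fm.fCount]; exact tsum_ne i hk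

end Helpers2
section Weakening

variable {L : FirstOrder.Language.{u, v}}

/-- `AtomCover E Γ`: every free variable of `E` occurs in some atomic formula of `Γ`. -/
def AtomCover (E : Fm L) (Γ : Multiset (Fm L)) : Prop :=
  ∀ w, Fm.fCount w E ≠ 0 → ∃ C ∈ Γ, C.IsAtomic ∧ Fm.fCount w C ≠ 0

lemma AtomCover.mono {E : Fm L} {Γ Γ' : Multiset (Fm L)}
    (h : AtomCover E Γ) (hm : ∀ C ∈ Γ, C ∈ Γ') : AtomCover E Γ' := by
  intro w hw
  obtain ⟨C, hC, ha, hc⟩ := h w hw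
  exact ⟨C, hm C hC, ha, hc⟩

lemma AtomCover.drop {E A : Fm L} {Γ : Multiset (Fm L)}
    (h : AtomCover E (A ::ₘ Γ)) (hA : ¬ A.IsAtomic) : AtomCover E Γ := by
  intro w hw
  obtain ⟨C, hC, ha, hc⟩ := h w hw
  rcases Multiset.mem_cons.mp hC with rfl | hC
  · exact absurd ha hA
  · exact ⟨C, hC, ha, hc⟩

lemma IsAtomic_subst {P : Fm L} (hP : P.IsAtomic) (v : ℕ) (t : L.Term ℕ) :
    (P.subst v t).IsAtomic := by
  cases hP with
  | equal t₁ t₂ => exact Fm.IsAtomic.equal _ _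
  | rel R ts => exact Fm.IsAtomic.rel _ _

/-- Weakening by a formula whose free variables all occur in atomic antecedent formulas. -/
lemma weakE {n : ℕ} {Γ Δ : Multiset (Fm L)}
    (h : DerC (ReplMinus1 L) n Γ Δ) :
    ∀ E : Fm L, AtomCover E Γ →
    ∃ m, DerC (ReplMinus1 L) m (E ::ₘ Γ) Δ := by
  induction h with
  | @ax n Γ Δ P hP =>
      intro E hE
      exact ⟨n, by rw [Multiset.cons_swap]; exact DerC.ax hP⟩
  | @botL n Γ Δ =>
      intro E hE
      exact ⟨n, by rw [Multiset.cons_swap]; exact DerC.botL⟩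
  | @andL n Γ Δ A B hp ih =>
      intro E hE
      obtain ⟨m, hm⟩ := ih E ((hE.drop (by rintro ⟨⟩)).mono
        (fun C hC => by simp [Multiset.mem_cons, hC]))
      refine ⟨m + 1, ?_⟩
      rw [Multiset.cons_swap]
      apply DerC.andL
      rw [Multiset.cons_swap B E, Multiset.cons_swap A E]
      exact hm
  | @andR n Γ Δ A B hp1 hp2 ih1 ih2 =>
      intro E hE
      obtain ⟨m1, h1⟩ := ih1 E hE
      obtain ⟨m2, h2⟩ := ih2 E hE
      exact ⟨max m1 m2 + 1,
        DerC.andR (DerC_mono h1 (le_max_left _ _)) (DerC_mono h2 (le_max_right _ _))⟩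
  | @orL n Γ Δ A B hp1 hp2 ih1 ih2 =>
      intro E hE
      have hE' := hE.drop (by rintro ⟨⟩)
      obtain ⟨m1, h1⟩ := ih1 E (hE'.mono (fun C hC => by simp [Multiset.mem_cons, hC]))
      obtain ⟨m2, h2⟩ := ih2 E (hE'.mono (fun C hC => by simp [Multiset.mem_cons, hC]))
      refine ⟨max m1 m2 + 1, ?_⟩
      rw [Multiset.cons_swap]
      apply DerC.orL
      · rw [Multiset.cons_swap A E]; exact DerC_mono h1 (le_max_left _ _)
      · rw [Multiset.cons_swap B E]; exact DerC_mono h2 (le_max_right _ _)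
  | @orR n Γ Δ A B hp ih =>
      intro E hE
      obtain ⟨m, hm⟩ := ih E hE
      exact ⟨m + 1, DerC.orR hm⟩
  | @impL n Γ Δ A B hp1 hp2 ih1 ih2 =>
      intro E hE
      have hE' := hE.drop (by rintro ⟨⟩)
      obtain ⟨m1, h1⟩ := ih1 E hE'
      obtain ⟨m2, h2⟩ := ih2 E (hE'.mono (fun C hC => by simp [Multiset.mem_cons, hC]))
      refine ⟨max m1 m2 + 1, ?_⟩
      rw [Multiset.cons_swap]
      apply DerC.impL
      · exact DerC_mono h1 (le_max_left _ _)
      · rw [Multiset.cons_swap B E]; exact DerC_mono h2 (le_max_right _ _)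
  | @impR n Γ Δ A B hp ih =>
      intro E hE
      obtain ⟨m, hm⟩ := ih E (hE.mono (fun C hC => by simp [Multiset.mem_cons, hC]))
      refine ⟨m + 1, ?_⟩
      apply DerC.impR
      rw [Multiset.cons_swap A E]
      exact hm
  | @allL n Γ Δ x t A hf hp ih =>
      intro E hE
      obtain ⟨m, hm⟩ := ih E (hE.mono (fun C hC => Multiset.mem_cons.mpr (Or.inr hC)))
      refine ⟨m + 1, ?_⟩
      rw [Multiset.cons_swap]
      apply DerC.allL hf
      rw [Multiset.cons_swap (Fm.all x A) E, Multiset.cons_swap (A.subst x t) E]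
      exact hm
  | @allR n Γ Δ x y A hf hy hΓ hΔ hp ih =>
      intro E hE
      obtain ⟨m, hm⟩ := ih E hE
      refine ⟨m + 1, ?_⟩
      refine DerC.allR hf hy ?_ hΔ hm
      intro C hC
      rcases Multiset.mem_cons.mp hC with rfl | hC
      · rw [mem_freeVars]
        intro hyE
        obtain ⟨C', hC', -, hc'⟩ := hE y hyE
        exact hΓ C' hC' (mem_freeVars.mpr hc')
      · exact hΓ C hC
  | @exL n Γ Δ x y A hf hy hΓ hΔ hp ih =>
      intro E hE
      have hE' := hE.drop (by rintro ⟨⟩)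
      obtain ⟨m, hm⟩ := ih E (hE'.mono (fun C hC => by simp [Multiset.mem_cons, hC]))
      refine ⟨m + 1, ?_⟩
      rw [Multiset.cons_swap]
      refine DerC.exL hf hy ?_ hΔ ?_
      · intro C hC
        rcases Multiset.mem_cons.mp hC with rfl | hC
        · rw [mem_freeVars]
          intro hyE
          obtain ⟨C', hC', -, hc'⟩ := hE' y hyE
          exact hΓ C' hC' (mem_freeVars.mpr hc')
        · exact hΓ C hC
      · rw [Multiset.cons_swap (A.subst x (Term.var y)) E]
        exact hm
  | @exR n Γ Δ x t A hf hp ih =>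
      intro E hE
      obtain ⟨m, hm⟩ := ih E hE
      exact ⟨m + 1, DerC.exR hf hm⟩
  | @ref n Γ Δ t hp ih =>
      intro E hE
      obtain ⟨m, hm⟩ := ih E (hE.mono (fun C hC => by simp [Multiset.mem_cons, hC]))
      refine ⟨m + 1, DerC.ref t ?_⟩
      rw [Multiset.cons_swap (Fm.equal t t) E]
      exact hm
  | @repl n Γp Γc Δ hr hp ih =>
      intro E hE
      obtain ⟨s', r', v, P, Θ, hat, hs, hrr, h1, hpe, hce⟩ := hr
      subst hpe hce
      obtain ⟨m, hm⟩ := ih E (by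
        intro w hw
        obtain ⟨C, hC, ha, hc⟩ := hE w hw
        rcases Multiset.mem_cons.mp hC with rfl | hC
        · exact ⟨_, Multiset.mem_cons_self _ _, ha, hc⟩
        rcases Multiset.mem_cons.mp hC with rfl | hC
        · rcases fCount_subst_atomic hat (r' := r') hc with hk | hk
          · refine ⟨Fm.equal s' r', Multiset.mem_cons_self _ _, Fm.IsAtomic.equal _ _, ?_⟩
            rw [Fm.fCount]; omega
          · exact ⟨P.subst v r',
              Multiset.mem_cons.mpr (Or.inr (Multiset.mem_cons_self _ _)),
              IsAtomic_subst hat v r', hk⟩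
        · exact ⟨C, by simp [Multiset.mem_cons, hC], ha, hc⟩)
      refine ⟨m + 1, ?_⟩
      rw [Multiset.cons_swap E (Fm.equal s' r'), Multiset.cons_swap E (P.subst v s')]
      refine DerC.repl ⟨s', r', v, P, E ::ₘ Θ, hat, hs, hrr, h1, rfl, rfl⟩ ?_
      rw [Multiset.cons_swap (P.subst v r') E, Multiset.cons_swap (Fm.equal s' r') E]
      exact hm

end Weakening
/-- The symmetry rule Symm is admissible in `G3c₁^=⁻`: if `s = r, Γ ⇒ Δ` is derivable,
then so is `r = s, Γ ⇒ Δ`. -/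
theorem symm_admissible_G3c1EqMinus (L : FirstOrder.Language.{u, v})
    (s r : L.Term ℕ) (Γ Δ : Multiset (Fm L))
    (hd : ∃ n, DerC (ReplMinus1 L) n (Fm.equal s r ::ₘ Γ) Δ) :
    ∃ n, DerC (ReplMinus1 L) n (Fm.equal r s ::ₘ Γ) Δ := by
  obtain ⟨n, hD⟩ := hd
  -- weaken the given derivation by `r = s`
  obtain ⟨m, hW⟩ := weakE hD (Fm.equal r s) (fun w hw =>
    ⟨Fm.equal s r, Multiset.mem_cons_self _ _, Fm.IsAtomic.equal _ _, by
      rw [Fm.fCount] at hw ⊢; omega⟩)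
  -- choose a variable `w0` occurring in neither `s` nor `r`
  obtain ⟨N1, h1⟩ := tBound s
  obtain ⟨N2, h2⟩ := tBound r
  have hws : tCount (max N1 N2) s = 0 := h1 _ (le_max_left _ _)
  have hwr : tCount (max N1 N2) r = 0 := h2 _ (le_max_right _ _)
  set w0 := max N1 N2
  set P : Fm L := Fm.equal (Term.var w0) r with hP
  have e1 : P.subst w0 s = Fm.equal s r := by
    rw [hP, Fm.subst]
    show Fm.equal ((Term.var w0).subst _) (r.subst _) = _
    rw [subst_id hwr]
    congr 1
    show Function.update Term.var w0 s w0 = s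
    rw [Function.update_self]
  have e2 : P.subst w0 r = Fm.equal r r := by
    rw [hP, Fm.subst]
    show Fm.equal ((Term.var w0).subst _) (r.subst _) = _
    rw [subst_id hwr]
    congr 1
    show Function.update Term.var w0 r w0 = r
    rw [Function.update_self]
  have hone : Fm.fCount w0 P = 1 := by
    rw [hP, Fm.fCount, hwr, tCount]
    simp
  have hrepl : ReplMinus1 L (Fm.equal r s ::ₘ P.subst w0 s ::ₘ Γ)
      (Fm.equal r s ::ₘ P.subst w0 r ::ₘ Γ) :=
    ⟨r, s, w0, P, Γ, Fm.IsAtomic.equal _ _, hwr, hws, hone, rfl, rfl⟩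
  have step1 : DerC (ReplMinus1 L) (m + 1) (Fm.equal r s ::ₘ Fm.equal r r ::ₘ Γ) Δ := by
    rw [← e2]
    refine DerC.repl hrepl ?_
    rw [e1]
    exact hW
  refine ⟨m + 2, DerC.ref r ?_⟩
  rw [Multiset.cons_swap]
  exact step1
end
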